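/- Let H be a weak Frobenius algebra with Δ = Δ(1_H) ∈ H⊗H satisfying Δ·(h⊗1) = Δ·(1⊗h) for all h ∈ H (the bimodule property), and let σ swap the two tensor factors. Write Δ_{ij} for the image of Δ in the (i,j) factors of H^{⊗n}. Define ∇_{ij} = (1 − x_i x_j^{-1})^{-1} Δ_{ij} (1 − r_{ij}) acting on H^{⊗n}[x_1^{±1},…,x_n^{±1}], where r_{ij} swaps variables i and j. Then for all h, h' ∈ H and a, b ∈ ℤ: ∇_{ij}((h x^a)_i (h' x^b)_j) = (hh')_i Δ_{ij} (x_i^a x_j^b − x_i^b x_j^a)/(1 − x_i x_j^{-1}), and this lies in H^{⊗n}[x_1^{±1},…,x_n^{±1}] (no denominators remain). -/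

import Mathlib

open TensorProduct

section aux
variable {R : Type*} [CommRing R]

lemma key_dvd (m : ℤ) :
    (1 - AddMonoidAlgebra.single ((1:ℤ),(-1:ℤ)) (1:R)) ∣
      (AddMonoidAlgebra.single ((m:ℤ),(0:ℤ)) (1:R) - AddMonoidAlgebra.single ((0:ℤ),(m:ℤ)) (1:R)) := by
  induction m using Int.induction_on with
  | zero => simp
  | succ n ih =>
    obtain ⟨c, hc⟩ := ih
    refine ⟨AddMonoidAlgebra.single (1,0) 1 * c -
      AddMonoidAlgebra.single (0,1) 1 * AddMonoidAlgebra.single (0,(n:ℤ)) 1, ?_⟩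
    have h1 : AddMonoidAlgebra.single (((n:ℤ)+1),(0:ℤ)) (1:R)
        = AddMonoidAlgebra.single (1,0) 1 * AddMonoidAlgebra.single ((n:ℤ),0) 1 := by
      rw [AddMonoidAlgebra.single_mul_single, one_mul]; congr 1 <;> (simp [Prod.ext_iff] <;> omega)
    have h2 : AddMonoidAlgebra.single ((0:ℤ),((n:ℤ)+1)) (1:R)
        = AddMonoidAlgebra.single (0,1) 1 * AddMonoidAlgebra.single ((0:ℤ),(n:ℤ)) 1 := by
      rw [AddMonoidAlgebra.single_mul_single, one_mul]; congr 1 <;> (simp [Prod.ext_iff] <;> omega)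
    have h3 : AddMonoidAlgebra.single ((1:ℤ),(0:ℤ)) (1:R)
        = AddMonoidAlgebra.single ((1:ℤ),(-1:ℤ)) 1 * AddMonoidAlgebra.single ((0:ℤ),(1:ℤ)) 1 := by
      rw [AddMonoidAlgebra.single_mul_single, one_mul]; congr 1 <;> (simp [Prod.ext_iff] <;> omega)
    rw [h1, h2]
    linear_combination (AddMonoidAlgebra.single ((1:ℤ),(0:ℤ)) (1:R)) * hc
      + (AddMonoidAlgebra.single ((0:ℤ),(n:ℤ)) (1:R)) * h3
  | pred n ih =>
    obtain ⟨c, hc⟩ := ih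
    refine ⟨AddMonoidAlgebra.single (-1,0) 1 * c +
      AddMonoidAlgebra.single (-1,0) 1 * AddMonoidAlgebra.single (0,(-n:ℤ)) 1, ?_⟩
    have h1 : AddMonoidAlgebra.single ((-(n:ℤ)-1),(0:ℤ)) (1:R)
        = AddMonoidAlgebra.single (-1,0) 1 * AddMonoidAlgebra.single ((-n:ℤ),0) 1 := by
      rw [AddMonoidAlgebra.single_mul_single, one_mul]; congr 1 <;> (simp [Prod.ext_iff] <;> omega)
    have h2 : AddMonoidAlgebra.single ((0:ℤ),(-(n:ℤ)-1)) (1:R)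
        = AddMonoidAlgebra.single ((1:ℤ),(-1:ℤ)) 1 * AddMonoidAlgebra.single ((-1:ℤ),(0:ℤ)) 1
          * AddMonoidAlgebra.single ((0:ℤ),(-n:ℤ)) 1 := by
      rw [AddMonoidAlgebra.single_mul_single, AddMonoidAlgebra.single_mul_single, one_mul, one_mul]; congr 1 <;> (simp [Prod.ext_iff] <;> omega)
    rw [h1, h2]
    linear_combination (AddMonoidAlgebra.single ((-1:ℤ),(0:ℤ)) (1:R)) * hc
end aux

/-- Let `H` be a weak Frobenius algebra with
`Δ = Δ(1_H) ∈ H⊗H` satisfying the bimodule property `Δ·(h⊗1) = Δ·(1⊗h)` and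
symmetry `σ(Δ) = Δ` (`σ` the factor swap).  On the Laurent polynomial ring
`(H⊗H)[x_i^{±1}, x_j^{±1}]` (only the `i`-th and `j`-th tensor factors and
variables are relevant; the ring is modelled as
`AddMonoidAlgebra (H ⊗[ℂ] H) (ℤ × ℤ)`), with `r = r_{ij}` the involution
swapping both the two variables and the two tensor factors, the operator
`∇_{ij} = (1 − x_i x_j^{-1})^{-1} Δ_{ij} (1 − r_{ij})` satisfies, for all
`h, h' ∈ H` and `a, b ∈ ℤ`:
`∇_{ij}((h x^a)_i (h' x^b)_j) = (hh')_i Δ_{ij} (x_i^a x_j^b − x_i^b x_j^a)/(1 − x_i x_j^{-1})`,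
and this lies in the Laurent polynomial ring (no denominators remain): i.e.
there is `q` in the Laurent ring with
`(1 − x_i x_j^{-1})·q = Δ·((h⊗h') x_i^a x_j^b − σ(h⊗h') x_i^b x_j^a)
                      = Δ·(hh'⊗1)·(x_i^a x_j^b − x_i^b x_j^a)`. -/
theorem stmt_16 (H : Type*) [CommRing H] [Algebra ℂ H]
    (Δel : H ⊗[ℂ] H)
    -- bimodule property `Δ(h_i − h_j) = 0` and symmetry `σ(Δ) = Δ`
    (hbim : ∀ h : H, Δel * (h ⊗ₜ[ℂ] 1) = Δel * ((1 : H) ⊗ₜ[ℂ] h))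
    (hsym : Algebra.TensorProduct.comm ℂ H H Δel = Δel)
    -- the Laurent model and the swap `r_{ij}`
    (r : AddMonoidAlgebra (H ⊗[ℂ] H) (ℤ × ℤ) ≃+* AddMonoidAlgebra (H ⊗[ℂ] H) (ℤ × ℤ))
    (hr : ∀ (g : ℤ × ℤ) (c : H ⊗[ℂ] H),
      r (AddMonoidAlgebra.single g c) =
        AddMonoidAlgebra.single (g.2, g.1) (Algebra.TensorProduct.comm ℂ H H c)) :
    ∀ (h h' : H) (a b : ℤ),
      letI const : (H ⊗[ℂ] H) →+* AddMonoidAlgebra (H ⊗[ℂ] H) (ℤ × ℤ) :=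
        AddMonoidAlgebra.singleZeroRingHom
      letI Xm : ℤ × ℤ → AddMonoidAlgebra (H ⊗[ℂ] H) (ℤ × ℤ) :=
        fun g => AddMonoidAlgebra.single g 1
      letI f := const (h ⊗ₜ[ℂ] h') * Xm (a, b)
      ∃ q : AddMonoidAlgebra (H ⊗[ℂ] H) (ℤ × ℤ),
        -- `q = ∇_{ij}(f)`, i.e. `(1 − x_i x_j^{-1})·q = Δ·(f − r f)` ...
        (1 - Xm (1, -1)) * q = const Δel * (f - r f) ∧
        -- ... and `q` is given by the stated formula
        (1 - Xm (1, -1)) * q =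
          const (Δel * ((h * h') ⊗ₜ[ℂ] (1 : H))) * (Xm (a, b) - Xm (b, a)) := by
  intro h h' a b
  -- algebra facts in H ⊗ H
  have hmul : Δel * (h ⊗ₜ[ℂ] h') = Δel * ((h * h') ⊗ₜ[ℂ] (1 : H)) := by
    calc Δel * (h ⊗ₜ[ℂ] h')
        = Δel * (((1:H) ⊗ₜ[ℂ] h') * (h ⊗ₜ[ℂ] (1:H))) := by
          rw [Algebra.TensorProduct.tmul_mul_tmul]; ring_nf
      _ = (Δel * ((1:H) ⊗ₜ[ℂ] h')) * (h ⊗ₜ[ℂ] (1:H)) := by ring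
      _ = (Δel * (h' ⊗ₜ[ℂ] (1:H))) * (h ⊗ₜ[ℂ] (1:H)) := by rw [hbim h']
      _ = Δel * ((h * h') ⊗ₜ[ℂ] (1:H)) := by
          rw [mul_assoc, Algebra.TensorProduct.tmul_mul_tmul]; ring_nf
  have hmul' : Δel * (h' ⊗ₜ[ℂ] h) = Δel * ((h * h') ⊗ₜ[ℂ] (1 : H)) := by
    rw [show h * h' = h' * h from mul_comm h h']
    calc Δel * (h' ⊗ₜ[ℂ] h)
        = Δel * (((1:H) ⊗ₜ[ℂ] h) * (h' ⊗ₜ[ℂ] (1:H))) := by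
          rw [Algebra.TensorProduct.tmul_mul_tmul]; ring_nf
      _ = (Δel * ((1:H) ⊗ₜ[ℂ] h)) * (h' ⊗ₜ[ℂ] (1:H)) := by ring
      _ = (Δel * (h ⊗ₜ[ℂ] (1:H))) * (h' ⊗ₜ[ℂ] (1:H)) := by rw [hbim h]
      _ = Δel * ((h' * h) ⊗ₜ[ℂ] (1:H)) := by
          rw [mul_assoc, Algebra.TensorProduct.tmul_mul_tmul]; ring_nf
  -- divisibility
  obtain ⟨c, hc⟩ : (1 - AddMonoidAlgebra.single ((1:ℤ),(-1:ℤ)) (1 : H ⊗[ℂ] H)) ∣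
      (AddMonoidAlgebra.single (a, b) 1 - AddMonoidAlgebra.single (b, a) (1 : H ⊗[ℂ] H)) := by
    have hd := (key_dvd (R := H ⊗[ℂ] H) (a - b)).mul_left (AddMonoidAlgebra.single (b, b) 1)
    have e1 : AddMonoidAlgebra.single ((b:ℤ),(b:ℤ)) (1 : H ⊗[ℂ] H) *
        (AddMonoidAlgebra.single (a - b, 0) 1 - AddMonoidAlgebra.single (0, a - b) 1)
        = AddMonoidAlgebra.single (a, b) 1 - AddMonoidAlgebra.single (b, a) 1 := by
      rw [mul_sub, AddMonoidAlgebra.single_mul_single, AddMonoidAlgebra.single_mul_single, one_mul]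
      congr 2 <;> (simp [Prod.ext_iff] <;> omega)
    rwa [e1] at hd
  refine ⟨AddMonoidAlgebra.single 0 (Δel * ((h * h') ⊗ₜ[ℂ] (1 : H))) * c, ?_, ?_⟩
  · -- first equation
    have hf : AddMonoidAlgebra.singleZeroRingHom (h ⊗ₜ[ℂ] h') *
        AddMonoidAlgebra.single ((a:ℤ), (b:ℤ)) (1 : H ⊗[ℂ] H)
        = AddMonoidAlgebra.single (a, b) (h ⊗ₜ[ℂ] h') := by
      simp [AddMonoidAlgebra.singleZeroRingHom, AddMonoidAlgebra.single_mul_single]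
    show (1 - AddMonoidAlgebra.single ((1:ℤ),(-1:ℤ)) (1 : H ⊗[ℂ] H)) *
        (AddMonoidAlgebra.single 0 (Δel * ((h * h') ⊗ₜ[ℂ] (1 : H))) * c)
      = AddMonoidAlgebra.singleZeroRingHom Δel *
        (AddMonoidAlgebra.singleZeroRingHom (h ⊗ₜ[ℂ] h') * AddMonoidAlgebra.single (a, b) 1
          - r (AddMonoidAlgebra.singleZeroRingHom (h ⊗ₜ[ℂ] h') * AddMonoidAlgebra.single (a, b) 1))
    rw [hf, hr, Algebra.TensorProduct.comm_tmul]
    have lhs_eq : (1 - AddMonoidAlgebra.single ((1:ℤ),(-1:ℤ)) (1 : H ⊗[ℂ] H)) *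
        (AddMonoidAlgebra.single 0 (Δel * ((h * h') ⊗ₜ[ℂ] (1 : H))) * c)
        = AddMonoidAlgebra.single 0 (Δel * ((h * h') ⊗ₜ[ℂ] (1 : H))) *
          (AddMonoidAlgebra.single (a, b) 1 - AddMonoidAlgebra.single (b, a) 1) := by
      rw [mul_left_comm, ← hc]
    rw [lhs_eq]
    simp only [AddMonoidAlgebra.singleZeroRingHom, RingHom.coe_mk, MonoidHom.coe_mk, OneHom.coe_mk,
      Finsupp.singleAddHom, ZeroHom.coe_mk, AddMonoidHom.coe_mk, AddMonoidAlgebra.singleAddHom_apply,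
        ZeroHom.toFun_eq_coe, AddMonoidHom.coe_coe, AddMonoidAlgebra.singleAddHom]
    rw [mul_sub, mul_sub]
    simp only [AddMonoidAlgebra.single_mul_single, zero_add, mul_one, hmul, hmul']
  · show (1 - AddMonoidAlgebra.single ((1:ℤ),(-1:ℤ)) (1 : H ⊗[ℂ] H)) *
        (AddMonoidAlgebra.single 0 (Δel * ((h * h') ⊗ₜ[ℂ] (1 : H))) * c)
      = AddMonoidAlgebra.singleZeroRingHom (Δel * ((h * h') ⊗ₜ[ℂ] (1 : H))) *
        (AddMonoidAlgebra.single (a, b) 1 - AddMonoidAlgebra.single (b, a) 1)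
    rw [mul_left_comm, ← hc]
    simp only [AddMonoidAlgebra.singleZeroRingHom, RingHom.coe_mk, MonoidHom.coe_mk, OneHom.coe_mk,
      Finsupp.singleAddHom, ZeroHom.coe_mk, AddMonoidHom.coe_mk, AddMonoidAlgebra.singleAddHom_apply,
        ZeroHom.toFun_eq_coe, AddMonoidHom.coe_coe, AddMonoidAlgebra.singleAddHom]
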